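/- On the monoid QM = ⟨x, y, q | xq = qx, yq = qy, yx = xyq⟩, the relation ≺ defined by x^k y^l q^m ≺ x^{k'} y^{l'} q^{m'} iff (k > k') or (k = k' and l < l') or (k = k', l = l', m < m') is a partial order compatible with multiplication: if a ≺ a' and b ≺ b' then ab ≺ a'b'. -/

import Mathlib

/- On QM = ⟨x, y, q | xq = qx, yq = qy, yx = xyq⟩, the relation ≺ comparing
normal forms x^k y^l q^m by (k > k') or (k = k', l < l') or (k = k', l = l', m < m')
is a (strict) partial order compatible with multiplication:
a ≺ a' and b ≺ b' imply ab ≺ a'b'. -/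

namespace Stmt1

inductive QMrel : FreeMonoid (Fin 3) → FreeMonoid (Fin 3) → Prop
  | xq : QMrel (FreeMonoid.of 0 * FreeMonoid.of 2) (FreeMonoid.of 2 * FreeMonoid.of 0)
  | yq : QMrel (FreeMonoid.of 1 * FreeMonoid.of 2) (FreeMonoid.of 2 * FreeMonoid.of 1)
  | yx : QMrel (FreeMonoid.of 1 * FreeMonoid.of 0)
      (FreeMonoid.of 0 * FreeMonoid.of 1 * FreeMonoid.of 2)

def QM := (conGen QMrel).Quotient

noncomputable instance : Monoid QM := Con.monoid _

noncomputable def x : QM := (conGen QMrel).mk' (FreeMonoid.of 0)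
noncomputable def y : QM := (conGen QMrel).mk' (FreeMonoid.of 1)
noncomputable def q : QM := (conGen QMrel).mk' (FreeMonoid.of 2)

/-- The normal form `x^k * y^l * q^m` associated to the triple `(k, l, m)`. -/
noncomputable def nf (t : ℕ × ℕ × ℕ) : QM := x ^ t.1 * y ^ t.2.1 * q ^ t.2.2

/-- The comparison of triples: `(k,l,m) ≺ (k',l',m')` iff `k > k'`, or `k = k'` and
`l < l'`, or `k = k'`, `l = l'` and `m < m'`. -/
def lexlt (t t' : ℕ × ℕ × ℕ) : Prop :=
  t'.1 < t.1 ∨ (t.1 = t'.1 ∧ t.2.1 < t'.2.1) ∨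
    (t.1 = t'.1 ∧ t.2.1 = t'.2.1 ∧ t.2.2 < t'.2.2)

/-- The relation `≺` on `QM`, defined via normal forms. -/
def prec (a b : QM) : Prop := ∃ t t' : ℕ × ℕ × ℕ, a = nf t ∧ b = nf t' ∧ lexlt t t'

/-! ### Auxiliary: a Heisenberg-type monoid on triples -/

/-- Heisenberg-type monoid on triples of naturals. -/
structure Htype where
  k : ℕ
  l : ℕ
  m : ℕ

instance : Mul Htype := ⟨fun a b => ⟨a.k + b.k, a.l + b.l, a.m + b.m + a.l * b.k⟩⟩
instance : One Htype := ⟨⟨0, 0, 0⟩⟩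

lemma Hmul_def (a b : Htype) :
    a * b = ⟨a.k + b.k, a.l + b.l, a.m + b.m + a.l * b.k⟩ := rfl

lemma Hone_def : (1 : Htype) = ⟨0, 0, 0⟩ := rfl

instance : Monoid Htype where
  mul_assoc a b c := by
    simp only [Hmul_def, Htype.mk.injEq]
    refine ⟨by ring, by ring, by ring⟩
  one_mul a := by cases a; simp [Hmul_def, Hone_def]
  mul_one a := by cases a; simp [Hmul_def, Hone_def]

/-- The triple-multiplication on plain triples, matching `Htype`. -/
def Hmul (s t : ℕ × ℕ × ℕ) : ℕ × ℕ × ℕ :=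
  (s.1 + t.1, s.2.1 + t.2.1, s.2.2 + t.2.2 + s.2.1 * t.1)

/-- The generators' images in `Htype`. -/
def f : Fin 3 → Htype := fun i =>
  if i = 0 then ⟨1, 0, 0⟩ else if i = 1 then ⟨0, 1, 0⟩ else ⟨0, 0, 1⟩

noncomputable def φ : FreeMonoid (Fin 3) →* Htype := FreeMonoid.lift f

lemma conGen_le_ker : conGen QMrel ≤ Con.ker φ := by
  apply Con.conGen_le.mpr
  rintro a b h
  rw [Con.ker_rel]
  cases h <;>
    simp [φ, map_mul, FreeMonoid.lift_eval_of, f, Hmul_def]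

noncomputable def ψ : QM →* Htype := Con.lift _ φ conGen_le_ker

lemma ψ_x : ψ x = ⟨1, 0, 0⟩ := by
  show Con.lift _ φ conGen_le_ker ((conGen QMrel).mk' (FreeMonoid.of 0)) = _
  rw [Con.lift_mk']; rfl

lemma ψ_y : ψ y = ⟨0, 1, 0⟩ := by
  show Con.lift _ φ conGen_le_ker ((conGen QMrel).mk' (FreeMonoid.of 1)) = _
  rw [Con.lift_mk']; rfl

lemma ψ_q : ψ q = ⟨0, 0, 1⟩ := by
  show Con.lift _ φ conGen_le_ker ((conGen QMrel).mk' (FreeMonoid.of 2)) = _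
  rw [Con.lift_mk']; rfl

lemma x_pow_H (n : ℕ) : (⟨1, 0, 0⟩ : Htype) ^ n = ⟨n, 0, 0⟩ := by
  induction n with
  | zero => rfl
  | succ n ih => rw [pow_succ, ih, Hmul_def]; simp

lemma y_pow_H (n : ℕ) : (⟨0, 1, 0⟩ : Htype) ^ n = ⟨0, n, 0⟩ := by
  induction n with
  | zero => rfl
  | succ n ih => rw [pow_succ, ih, Hmul_def]; simp

lemma q_pow_H (n : ℕ) : (⟨0, 0, 1⟩ : Htype) ^ n = ⟨0, 0, n⟩ := by
  induction n with
  | zero => rfl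
  | succ n ih => rw [pow_succ, ih, Hmul_def]; simp

lemma ψ_nf (t : ℕ × ℕ × ℕ) : ψ (nf t) = ⟨t.1, t.2.1, t.2.2⟩ := by
  obtain ⟨k, l, m⟩ := t
  simp only [nf, map_mul, map_pow, ψ_x, ψ_y, ψ_q, x_pow_H, y_pow_H, q_pow_H, Hmul_def]
  simp

lemma nf_inj {s t : ℕ × ℕ × ℕ} (h : nf s = nf t) : s = t := by
  have h2 := congrArg ψ h
  rw [ψ_nf, ψ_nf] at h2
  obtain ⟨a, b, c⟩ := s
  obtain ⟨a', b', c'⟩ := t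
  simp only [Htype.mk.injEq] at h2
  simp [Prod.ext_iff]
  exact h2

/-! ### Relations in QM -/

lemma q_comm_x : q * x = x * q := by
  show (conGen QMrel).mk' (FreeMonoid.of 2) * (conGen QMrel).mk' (FreeMonoid.of 0)
      = (conGen QMrel).mk' (FreeMonoid.of 0) * (conGen QMrel).mk' (FreeMonoid.of 2)
  rw [← map_mul, ← map_mul]
  exact ((Con.eq _).mpr (ConGen.Rel.of _ _ QMrel.xq)).symm

lemma q_comm_y : q * y = y * q := by
  show (conGen QMrel).mk' (FreeMonoid.of 2) * (conGen QMrel).mk' (FreeMonoid.of 1)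
      = (conGen QMrel).mk' (FreeMonoid.of 1) * (conGen QMrel).mk' (FreeMonoid.of 2)
  rw [← map_mul, ← map_mul]
  exact ((Con.eq _).mpr (ConGen.Rel.of _ _ QMrel.yq)).symm

lemma yx_rel : y * x = x * y * q := by
  show (conGen QMrel).mk' (FreeMonoid.of 1) * (conGen QMrel).mk' (FreeMonoid.of 0)
      = (conGen QMrel).mk' (FreeMonoid.of 0) * (conGen QMrel).mk' (FreeMonoid.of 1)
        * (conGen QMrel).mk' (FreeMonoid.of 2)
  rw [← map_mul, ← map_mul, ← map_mul]
  exact (Con.eq _).mpr (ConGen.Rel.of _ _ QMrel.yx)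

lemma comm_qx : Commute q x := q_comm_x
lemma comm_qy : Commute q y := q_comm_y

lemma y_pow_x (l : ℕ) : y ^ l * x = x * y ^ l * q ^ l := by
  induction l with
  | zero => simp
  | succ n ih =>
    calc y ^ (n + 1) * x = y ^ n * (y * x) := by rw [pow_succ, mul_assoc]
      _ = y ^ n * (x * y * q) := by rw [yx_rel]
      _ = (y ^ n * x) * y * q := by simp [mul_assoc]
      _ = x * y ^ n * q ^ n * y * q := by rw [ih]
      _ = x * y ^ n * (q ^ n * y) * q := by simp [mul_assoc]
      _ = x * y ^ n * (y * q ^ n) * q := by rw [(comm_qy.pow_left n).eq]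
      _ = x * y ^ (n + 1) * q ^ (n + 1) := by
          rw [pow_succ, pow_succ]
          simp [mul_assoc, pow_succ]

lemma y_pow_x_pow (l k : ℕ) : y ^ l * x ^ k = x ^ k * y ^ l * q ^ (l * k) := by
  induction k with
  | zero => simp
  | succ n ih =>
    calc y ^ l * x ^ (n + 1) = (y ^ l * x ^ n) * x := by rw [pow_succ, mul_assoc]
      _ = x ^ n * y ^ l * q ^ (l * n) * x := by rw [ih]
      _ = x ^ n * y ^ l * (q ^ (l * n) * x) := by rw [mul_assoc]
      _ = x ^ n * y ^ l * (x * q ^ (l * n)) := by rw [(comm_qx.pow_left _).eq]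
      _ = x ^ n * (y ^ l * x) * q ^ (l * n) := by simp [mul_assoc]
      _ = x ^ n * (x * y ^ l * q ^ l) * q ^ (l * n) := by rw [y_pow_x]
      _ = x ^ (n + 1) * y ^ l * q ^ (l * (n + 1)) := by
          rw [pow_succ]
          have : l * (n + 1) = l + l * n := by ring
          rw [this, pow_add]
          simp [mul_assoc]

lemma nf_mul (s t : ℕ × ℕ × ℕ) : nf s * nf t = nf (Hmul s t) := by
  obtain ⟨k, l, m⟩ := s
  obtain ⟨k', l', m'⟩ := t
  show x ^ k * y ^ l * q ^ m * (x ^ k' * y ^ l' * q ^ m')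
      = x ^ (k + k') * y ^ (l + l') * q ^ (m + m' + l * k')
  have cqx : ∀ a b : ℕ, Commute (q ^ a) (x ^ b) := fun a b => comm_qx.pow_pow a b
  have cqy : ∀ a b : ℕ, Commute (q ^ a) (y ^ b) := fun a b => comm_qy.pow_pow a b
  calc x ^ k * y ^ l * q ^ m * (x ^ k' * y ^ l' * q ^ m')
      = x ^ k * (y ^ l * (q ^ m * (x ^ k' * (y ^ l' * q ^ m')))) := by
        simp [mul_assoc]
    _ = x ^ k * (y ^ l * (x ^ k' * (q ^ m * (y ^ l' * q ^ m')))) := by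
        rw [(cqx m k').left_comm]
    _ = x ^ k * (y ^ l * (x ^ k' * (y ^ l' * (q ^ m * q ^ m')))) := by
        rw [(cqy m l').left_comm]
    _ = x ^ k * ((y ^ l * x ^ k') * (y ^ l' * (q ^ m * q ^ m'))) := by
        simp [mul_assoc]
    _ = x ^ k * ((x ^ k' * y ^ l * q ^ (l * k')) * (y ^ l' * (q ^ m * q ^ m'))) := by
        rw [y_pow_x_pow]
    _ = x ^ k * (x ^ k' * (y ^ l * (q ^ (l * k') * (y ^ l' * (q ^ m * q ^ m'))))) := by
        simp [mul_assoc]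
    _ = x ^ k * (x ^ k' * (y ^ l * (y ^ l' * (q ^ (l * k') * (q ^ m * q ^ m'))))) := by
        rw [(cqy (l * k') l').left_comm]
    _ = x ^ (k + k') * y ^ (l + l') * q ^ (m + m' + l * k') := by
        rw [← pow_add, ← pow_add]
        have : l * k' + (m + m') = m + m' + l * k' := by ring
        rw [this, pow_add x, pow_add y]
        simp [mul_assoc]

lemma lexlt_hmul {t t' s s' : ℕ × ℕ × ℕ} (h : lexlt t t') (h' : lexlt s s') :
    lexlt (Hmul t s) (Hmul t' s') := by
  obtain ⟨a1, a2, a3⟩ := t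
  obtain ⟨b1, b2, b3⟩ := t'
  obtain ⟨c1, c2, c3⟩ := s
  obtain ⟨d1, d2, d3⟩ := s'
  simp only [lexlt, Hmul] at h h' ⊢
  rcases h with h | ⟨e1, h⟩ | ⟨e1, e2, h⟩ <;>
    rcases h' with h' | ⟨e1', h'⟩ | ⟨e1', e2', h'⟩
  · left; omega
  · left; omega
  · left; omega
  · left; omega
  · right; left; omega
  · right; left; omega
  · left; omega
  · right; left; omega
  · right; right
    refine ⟨by omega, by omega, ?_⟩
    subst e2 e1'
    exact Nat.add_lt_add_right (Nat.add_lt_add h h') _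

theorem stmt1 :
    (∀ a : QM, ¬ prec a a) ∧
    (∀ a b c : QM, prec a b → prec b c → prec a c) ∧
    (∀ a a' b b' : QM, prec a a' → prec b b' → prec (a * b) (a' * b')) := by
  refine ⟨?_, ?_, ?_⟩
  · rintro a ⟨t, t', h1, h2, h3⟩
    have : t = t' := nf_inj (h1 ▸ h2 ▸ rfl)
    subst this
    simp only [lexlt] at h3
    omega
  · rintro a b c ⟨t, t', h1, h2, h3⟩ ⟨s, s', h4, h5, h6⟩
    have : t' = s := nf_inj (by rw [← h2, ← h4])
    subst this
    exact ⟨t, s', h1, h5, by simp only [lexlt] at *; omega⟩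
  · rintro a a' b b' ⟨t, t', h1, h2, h3⟩ ⟨s, s', h4, h5, h6⟩
    refine ⟨Hmul t s, Hmul t' s', ?_, ?_, lexlt_hmul h3 h6⟩
    · rw [h1, h4, nf_mul]
    · rw [h2, h5, nf_mul]

end Stmt1
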